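/- Let ψ : ℝ → ℝ be differentiable at z₀ with derivative ψ'(z₀), let I and p be functions that are continuous and positive at z₀ (with values I(ψ(z₀)) and p(z₀) respectively after composition/evaluation as appropriate). Define ξ_n(h) = ∫_0^h [n^{1/3}(ψ(z₀ + u n^{−1/3}) − ψ(z₀))] · I(ψ(z₀ + u n^{−1/3})) · p(z₀ + u n^{−1/3}) du for h ≥ 0. Then ξ_n(h) → (ψ'(z₀)/2) · I(ψ(z₀)) · p(z₀) · h² uniformly over h ∈ [0, K], for every K > 0. -/

import Mathlib

open MeasureTheory

/-- Drift computation in Lemma 2.2: the rescaled drift integral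
ξₙ(h) = ∫₀ʰ n^{1/3}(ψ(z₀+un^{−1/3}) − ψ(z₀)) I(ψ(z₀+un^{−1/3})) p(z₀+un^{−1/3}) du
converges to (ψ'(z₀)/2) I(ψ(z₀)) p(z₀) h² uniformly over h ∈ [0,K], for every K > 0.
Here J = I ∘ ψ. -/
theorem drift_uniform_convergence (ψ J p : ℝ → ℝ) (z₀ ψ'z₀ : ℝ)
    (hψm : Measurable ψ) (hJm : Measurable J) (hpm : Measurable p)
    (hψ : HasDerivAt ψ ψ'z₀ z₀)
    (hJ : ContinuousAt J z₀) (hJpos : 0 < J z₀)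
    (hp : ContinuousAt p z₀) (hppos : 0 < p z₀) :
    ∀ K : ℝ, 0 < K → ∀ ε : ℝ, 0 < ε → ∃ N : ℕ, ∀ n : ℕ, N ≤ n →
      ∀ h ∈ Set.Icc (0 : ℝ) K,
        |(∫ u in Set.Icc (0 : ℝ) h,
            ((n : ℝ) ^ ((1 : ℝ) / 3) * (ψ (z₀ + u * (n : ℝ) ^ (-(1 : ℝ) / 3)) - ψ z₀)) *
              J (z₀ + u * (n : ℝ) ^ (-(1 : ℝ) / 3)) *
              p (z₀ + u * (n : ℝ) ^ (-(1 : ℝ) / 3)))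
          - ψ'z₀ / 2 * J z₀ * p z₀ * h ^ 2| < ε := by
  intro K hK ε hε
  set b := J z₀ with hbdef
  set q := p z₀ with hqdef
  set c := ψ'z₀ with hcdef
  set D : ℝ := K * (|b| + 1) * (|q| + 1) + |c| * K * (|q| + 1) + |c| * K * |b| + 1 with hDdef
  have hD0 : 0 < D := by positivity
  set ε₁ : ℝ := min 1 (ε / (2 * (D * K + 1))) with hε₁def
  have hε₁pos : 0 < ε₁ := lt_min one_pos (by positivity)
  have hε₁le1 : ε₁ ≤ 1 := min_le_left _ _
  have hεfin : ε₁ * D * K < ε := by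
    have h1 : ε₁ ≤ ε / (2 * (D * K + 1)) := min_le_right _ _
    have h2 : (0:ℝ) < 2 * (D * K + 1) := by positivity
    have h3 : ε₁ * (D * K) ≤ ε / (2 * (D * K + 1)) * (D * K) :=
      mul_le_mul_of_nonneg_right h1 (by positivity)
    have h4 : ε / (2 * (D * K + 1)) * (D * K) < ε := by
      rw [div_mul_eq_mul_div, div_lt_iff₀ h2]
      nlinarith [mul_pos hD0 hK]
    calc ε₁ * D * K = ε₁ * (D * K) := by ring
    _ < ε := lt_of_le_of_lt h3 h4
  -- consequence of differentiability
  have hlo : ∀ᶠ x' in nhds z₀, ‖ψ x' - ψ z₀ - (x' - z₀) • c‖ ≤ ε₁ * ‖x' - z₀‖ :=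
    (hasDerivAt_iff_isLittleO.mp hψ).def hε₁pos
  obtain ⟨δ₁, hδ₁, H₁⟩ := Metric.eventually_nhds_iff.mp hlo
  obtain ⟨δ₂, hδ₂, H₂⟩ := Metric.continuousAt_iff.mp hJ ε₁ hε₁pos
  obtain ⟨δ₃, hδ₃, H₃⟩ := Metric.continuousAt_iff.mp hp ε₁ hε₁pos
  set δ : ℝ := min δ₁ (min δ₂ δ₃) with hδdef
  have hδ : 0 < δ := lt_min hδ₁ (lt_min hδ₂ hδ₃)
  have hδle1 : δ ≤ δ₁ := min_le_left _ _
  have hδle2 : δ ≤ δ₂ := le_trans (min_le_right _ _) (min_le_left _ _)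
  have hδle3 : δ ≤ δ₃ := le_trans (min_le_right _ _) (min_le_right _ _)
  clear_value b q c D ε₁ δ
  obtain ⟨N₀, hN₀⟩ := exists_nat_gt ((K / δ) ^ 3)
  refine ⟨max N₀ 1, ?_⟩
  intro n hn h hh
  have hn1 : 1 ≤ n := le_trans (le_max_right _ _) hn
  have hnR : (1:ℝ) ≤ (n:ℝ) := by exact_mod_cast hn1
  have hnN : ((K / δ) ^ 3 : ℝ) < (n : ℝ) :=
    lt_of_lt_of_le hN₀ (by exact_mod_cast le_trans (le_max_left _ _) hn)
  set s : ℝ := (n : ℝ) ^ (-(1 : ℝ) / 3) with hsdef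
  set r : ℝ := (n : ℝ) ^ ((1 : ℝ) / 3) with hrdef
  have hr1 : (1:ℝ) ≤ r := by
    calc (1:ℝ) = (1:ℝ) ^ ((1:ℝ)/3) := (Real.one_rpow _).symm
    _ ≤ r := Real.rpow_le_rpow zero_le_one hnR (by norm_num)
  have hrpos : (0:ℝ) < r := lt_of_lt_of_le one_pos hr1
  have hsr : s = r⁻¹ := by
    rw [hsdef, hrdef, show (-(1:ℝ)/3) = -((1:ℝ)/3) by ring,
      Real.rpow_neg (by positivity : (0:ℝ) ≤ (n:ℝ))]
  have hspos : (0:ℝ) < s := by rw [hsr]; positivity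
  have hrs : r * s = 1 := by rw [hsr]; field_simp
  have hr3 : r ^ 3 = (n : ℝ) := by
    rw [hrdef, ← Real.rpow_natCast ((n:ℝ) ^ ((1:ℝ)/3)) 3,
      ← Real.rpow_mul (by positivity : (0:ℝ) ≤ (n:ℝ))]
    norm_num
  have hKδ : K / δ < r := by
    apply lt_of_pow_lt_pow_left₀ 3 hrpos.le
    rw [hr3]; exact hnN
  have hKs : K * s < δ := by
    rw [hsr, ← div_eq_mul_inv, div_lt_iff₀ hrpos]
    have := (div_lt_iff₀ hδ).mp hKδ
    nlinarith
  clear_value s r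
  have hh0 : (0:ℝ) ≤ h := hh.1
  have hhK : h ≤ K := hh.2
  -- pointwise bound on the integrand
  have hpoint : ∀ u ∈ Set.Icc (0:ℝ) h,
      |(r * (ψ (z₀ + u * s) - ψ z₀)) * J (z₀ + u * s) * p (z₀ + u * s)
        - c * b * q * u| ≤ ε₁ * D := by
    intro u hu
    obtain ⟨hu0, huh⟩ := hu
    have huK : u ≤ K := le_trans huh hhK
    set t : ℝ := u * s with htdef
    set x : ℝ := z₀ + t with hxdef
    have ht0 : 0 ≤ t := mul_nonneg hu0 hspos.le
    have htδ : t < δ := lt_of_le_of_lt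
      (mul_le_mul_of_nonneg_right huK hspos.le) hKs
    have hxd : dist x z₀ < δ := by
      rw [Real.dist_eq, hxdef]
      rw [show z₀ + t - z₀ = t by ring, abs_of_nonneg ht0]
      exact htδ
    have hder : |ψ x - ψ z₀ - t * c| ≤ ε₁ * t := by
      have := H₁ (lt_of_lt_of_le hxd hδle1)
      rw [Real.norm_eq_abs, Real.norm_eq_abs, show x - z₀ = t by rw [hxdef]; ring,
        smul_eq_mul, abs_of_nonneg ht0] at this
      exact this
    have hJx : |J x - b| ≤ ε₁ := by
      have := H₂ (lt_of_lt_of_le hxd hδle2)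
      rw [Real.dist_eq, ← hbdef] at this
      exact this.le
    have hpx : |p x - q| ≤ ε₁ := by
      have := H₃ (lt_of_lt_of_le hxd hδle3)
      rw [Real.dist_eq, ← hqdef] at this
      exact this.le
    have hru : r * t = u := by
      rw [htdef, show r * (u * s) = (r * s) * u by ring, hrs, one_mul]
    have hA : |r * (ψ x - ψ z₀) - c * u| ≤ ε₁ * K := by
      have e : r * (ψ x - ψ z₀) - c * u = r * (ψ x - ψ z₀ - t * c) := by
        rw [← hru]; ring
      rw [e, abs_mul, abs_of_pos hrpos]
      calc r * |ψ x - ψ z₀ - t * c| ≤ r * (ε₁ * t) :=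
            mul_le_mul_of_nonneg_left hder hrpos.le
      _ = ε₁ * (r * t) := by ring
      _ = ε₁ * u := by rw [hru]
      _ ≤ ε₁ * K := mul_le_mul_of_nonneg_left huK hε₁pos.le
    have hJb : |J x| ≤ |b| + 1 := by
      have := abs_sub_abs_le_abs_sub (J x) b
      linarith [hJx, hε₁le1]
    have hpq : |p x| ≤ |q| + 1 := by
      have := abs_sub_abs_le_abs_sub (p x) q
      linarith [hpx, hε₁le1]
    have hcu : |c * u| ≤ |c| * K := by
      rw [abs_mul]
      exact mul_le_mul_of_nonneg_left (by rw [abs_of_nonneg hu0]; exact huK) (abs_nonneg c)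
    have e1 : (r * (ψ x - ψ z₀)) * J x * p x - c * b * q * u
        = (r * (ψ x - ψ z₀) - c * u) * (J x * p x)
          + (c * u) * ((J x - b) * p x) + (c * u * b) * (p x - q) := by ring
    have T1 : |(r * (ψ x - ψ z₀) - c * u) * (J x * p x)|
        ≤ (ε₁ * K) * ((|b| + 1) * (|q| + 1)) := by
      rw [abs_mul, abs_mul]
      exact mul_le_mul hA (mul_le_mul hJb hpq (abs_nonneg _) (by positivity))
        (by positivity) (by positivity)
    have T2 : |(c * u) * ((J x - b) * p x)| ≤ (|c| * K) * (ε₁ * (|q| + 1)) := by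
      rw [abs_mul (c * u) ((J x - b) * p x), abs_mul (J x - b) (p x)]
      exact mul_le_mul hcu (mul_le_mul hJx hpq (abs_nonneg _) hε₁pos.le)
        (by positivity) (by positivity)
    have hcub : |c * u * b| ≤ (|c| * K) * |b| := by
      rw [abs_mul]
      exact mul_le_mul_of_nonneg_right hcu (abs_nonneg b)
    have T3 : |(c * u * b) * (p x - q)| ≤ ((|c| * K) * |b|) * ε₁ := by
      rw [abs_mul]
      exact mul_le_mul hcub hpx (abs_nonneg _) (by positivity)
    have hDm : (ε₁ * K) * ((|b| + 1) * (|q| + 1))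
          + (|c| * K) * (ε₁ * (|q| + 1)) + ((|c| * K) * |b|) * ε₁ ≤ ε₁ * D := by
      have e2 : (ε₁ * K) * ((|b| + 1) * (|q| + 1))
          + (|c| * K) * (ε₁ * (|q| + 1)) + ((|c| * K) * |b|) * ε₁ = ε₁ * (D - 1) := by
        rw [hDdef]; ring
      have e3 : ε₁ * (D - 1) ≤ ε₁ * D :=
        mul_le_mul_of_nonneg_left (by linarith) hε₁pos.le
      linarith
    calc |(r * (ψ x - ψ z₀)) * J x * p x - c * b * q * u|
        ≤ |(r * (ψ x - ψ z₀) - c * u) * (J x * p x)|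
          + |(c * u) * ((J x - b) * p x)| + |(c * u * b) * (p x - q)| := by
          rw [e1]; exact (abs_add_le _ _).trans (add_le_add_left (abs_add_le _ _) _)
    _ ≤ (ε₁ * K) * ((|b| + 1) * (|q| + 1))
          + (|c| * K) * (ε₁ * (|q| + 1)) + ((|c| * K) * |b|) * ε₁ := by
          linarith
    _ ≤ ε₁ * D := hDm
  -- measurability
  have hφ : Measurable fun u : ℝ => z₀ + u * s :=
    measurable_const.add (measurable_id.mul_const s)
  have hmF : Measurable fun u : ℝ =>
      (r * (ψ (z₀ + u * s) - ψ z₀)) * J (z₀ + u * s) * p (z₀ + u * s) :=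
    ((measurable_const.mul ((hψm.comp hφ).sub measurable_const)).mul
      (hJm.comp hφ)).mul (hpm.comp hφ)
  -- integrability
  have hμ : volume (Set.Icc (0:ℝ) h) < ⊤ := measure_Icc_lt_top
  have hint1 : IntegrableOn
      (fun u : ℝ => (r * (ψ (z₀ + u * s) - ψ z₀)) * J (z₀ + u * s) * p (z₀ + u * s))
      (Set.Icc (0:ℝ) h) volume := by
    apply Measure.integrableOn_of_bounded (M := |c| * |b| * |q| * K + ε₁ * D) hμ.ne
      hmF.aestronglyMeasurable
    rw [ae_restrict_iff' measurableSet_Icc]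
    filter_upwards with u hu
    have h1 := hpoint u hu
    have h2 : |c * b * q * u| ≤ |c| * |b| * |q| * K := by
      have e4 : |c * b * q * u| = |c| * |b| * |q| * |u| := by
        rw [abs_mul, abs_mul, abs_mul]
      rw [e4]
      exact mul_le_mul_of_nonneg_left
        (by rw [abs_of_nonneg hu.1]; exact le_trans hu.2 hhK) (by positivity)
    rw [Real.norm_eq_abs]
    calc |(r * (ψ (z₀ + u * s) - ψ z₀)) * J (z₀ + u * s) * p (z₀ + u * s)|
        = |((r * (ψ (z₀ + u * s) - ψ z₀)) * J (z₀ + u * s) * p (z₀ + u * s)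
            - c * b * q * u) + c * b * q * u| := by congr 1; ring
    _ ≤ |(r * (ψ (z₀ + u * s) - ψ z₀)) * J (z₀ + u * s) * p (z₀ + u * s)
            - c * b * q * u| + |c * b * q * u| := abs_add_le _ _
    _ ≤ ε₁ * D + |c| * |b| * |q| * K := add_le_add h1 h2
    _ = |c| * |b| * |q| * K + ε₁ * D := by ring
  have hint2 : IntegrableOn (fun u : ℝ => c * b * q * u) (Set.Icc (0:ℝ) h) volume :=
    (continuous_const.mul continuous_id).integrableOn_Icc
  -- value of the limiting integral
  have hg : (∫ u in Set.Icc (0:ℝ) h, c * b * q * u) = c / 2 * b * q * h ^ 2 := by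
    rw [MeasureTheory.integral_Icc_eq_integral_Ioc,
      ← intervalIntegral.integral_of_le hh0, intervalIntegral.integral_const_mul,
      integral_id]
    ring
  -- bound on the difference of integrals
  have hsub : (∫ u in Set.Icc (0:ℝ) h,
        ((r * (ψ (z₀ + u * s) - ψ z₀)) * J (z₀ + u * s) * p (z₀ + u * s)
          - c * b * q * u))
      = (∫ u in Set.Icc (0:ℝ) h,
          (r * (ψ (z₀ + u * s) - ψ z₀)) * J (z₀ + u * s) * p (z₀ + u * s))
        - ∫ u in Set.Icc (0:ℝ) h, c * b * q * u :=
    integral_sub hint1 hint2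
  have hbound : |∫ u in Set.Icc (0:ℝ) h,
      ((r * (ψ (z₀ + u * s) - ψ z₀)) * J (z₀ + u * s) * p (z₀ + u * s)
        - c * b * q * u)| ≤ ε₁ * D * h := by
    have hCb : ∀ u ∈ Set.Icc (0:ℝ) h,
        ‖(r * (ψ (z₀ + u * s) - ψ z₀)) * J (z₀ + u * s) * p (z₀ + u * s)
          - c * b * q * u‖ ≤ ε₁ * D := by
      intro u hu; rw [Real.norm_eq_abs]; exact hpoint u hu
    have := norm_setIntegral_le_of_norm_le_const (μ := volume) hμ hCb
    rw [Real.norm_eq_abs] at this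
    calc |∫ u in Set.Icc (0:ℝ) h,
        ((r * (ψ (z₀ + u * s) - ψ z₀)) * J (z₀ + u * s) * p (z₀ + u * s)
          - c * b * q * u)| ≤ ε₁ * D * (volume (Set.Icc (0:ℝ) h)).toReal := this
    _ = ε₁ * D * h := by
        rw [Real.volume_Icc, ENNReal.toReal_ofReal (by linarith)]; ring_nf
  -- conclusion
  calc |(∫ u in Set.Icc (0:ℝ) h,
        (r * (ψ (z₀ + u * s) - ψ z₀)) * J (z₀ + u * s) * p (z₀ + u * s))
        - c / 2 * b * q * h ^ 2|
      = |∫ u in Set.Icc (0:ℝ) h,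
          ((r * (ψ (z₀ + u * s) - ψ z₀)) * J (z₀ + u * s) * p (z₀ + u * s)
            - c * b * q * u)| := by rw [hsub, hg]
  _ ≤ ε₁ * D * h := hbound
  _ ≤ ε₁ * D * K := by
      have : (0:ℝ) ≤ ε₁ * D := by positivity
      exact mul_le_mul_of_nonneg_left hhK this
  _ < ε := hεfin
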